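/- Let G be a graph with tree-independence number at most k and let I ⊆ V(G) be an independent set. Then there exists a partition (S, C1, C2, C3) of V(G) (some C_i may be empty) such that S is a (C1, C2, C3)-separator, α(S) ≤ k, and |I ∩ (C_i ∪ C_j)| ≥ |I|/2 − k for every pair of distinct i, j ∈ {1,2,3}. -/

import Mathlib

open SimpleGraph

/-- A set of vertices is independent if no two of its members are adjacent. -/
def SimpleGraph.IsIndep {V : Type} (G : SimpleGraph V) (s : Set V) : Prop :=
  s.Pairwise fun u v => ¬ G.Adj u v

/-- The independence number of the subgraph of `G` induced by `W`:
the largest size of a finite independent set contained in `W`. -/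
noncomputable def alphaOn {V : Type} (G : SimpleGraph V) (W : Set V) : ℕ :=
  sSup {n | ∃ S : Finset V, ↑S ⊆ W ∧ G.IsIndep ↑S ∧ S.card = n}

/-- A tree decomposition of `G` with decomposition tree `tree`. -/
structure TreeDecomp {V T : Type} (G : SimpleGraph V) (tree : SimpleGraph T) : Type where
  bag : T → Set V
  isTree : tree.IsTree
  mem_bag : ∀ v : V, ∃ t, v ∈ bag t
  edge_bag : ∀ ⦃u v : V⦄, G.Adj u v → ∃ t, u ∈ bag t ∧ v ∈ bag t
  conn : ∀ v : V, (tree.induce {t | v ∈ bag t}).Connected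

/-- `tree-α(G) ≤ k`: some tree decomposition of `G` has all bags of independence number `≤ k`. -/
def TreeAlphaLE {V : Type} (G : SimpleGraph V) (k : ℕ) : Prop :=
  ∃ (T : Type) (tree : SimpleGraph T) (td : TreeDecomp G tree),
    ∀ t : T, alphaOn G (td.bag t) ≤ k

/-- `S` separates `A` from `B` in `G`: no path of `G \ S` joins a vertex of `A`
to a vertex of `B`. -/
def SepFrom {V : Type} (G : SimpleGraph V) (S A B : Set V) : Prop :=
  ∀ a ∈ A, ∀ b ∈ B, ∀ (ha : a ∈ Sᶜ) (hb : b ∈ Sᶜ),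
    ¬ (G.induce Sᶜ).Reachable ⟨a, ha⟩ ⟨b, hb⟩

/-- `S` is a `(C1, C2, C3)`-separator: it is disjoint from each `Cᵢ` and in `G \ S`
there is no path between `Cᵢ` and `Cⱼ` for `i ≠ j`. -/
def IsSep3 {V : Type} (G : SimpleGraph V) (S C1 C2 C3 : Set V) : Prop :=
  Disjoint S C1 ∧ Disjoint S C2 ∧ Disjoint S C3 ∧
  SepFrom G S C1 C2 ∧ SepFrom G S C1 C3 ∧ SepFrom G S C2 C3


open SimpleGraph

namespace Stmt6Aux

variable {V : Type} (G : SimpleGraph V)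

/-- Two vertices joined by a walk avoiding `S`. -/
def Rel (S : Set V) (u v : V) : Prop := ∃ p : G.Walk u v, ∀ x ∈ p.support, x ∉ S

variable {G}

lemma Rel.not_mem_left {S : Set V} {u v : V} (h : Rel G S u v) : u ∉ S := by
  obtain ⟨p, hp⟩ := h
  exact hp u p.start_mem_support

lemma Rel.not_mem_right {S : Set V} {u v : V} (h : Rel G S u v) : v ∉ S := by
  obtain ⟨p, hp⟩ := h
  exact hp v p.end_mem_support

lemma rel_refl {S : Set V} {u : V} (hu : u ∉ S) : Rel G S u u :=
  ⟨SimpleGraph.Walk.nil, by simp [hu]⟩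

lemma Rel.symm {S : Set V} {u v : V} (h : Rel G S u v) : Rel G S v u := by
  obtain ⟨p, hp⟩ := h
  exact ⟨p.reverse, by simpa [SimpleGraph.Walk.support_reverse] using hp⟩

lemma Rel.trans {S : Set V} {u v w : V} (h : Rel G S u v) (h' : Rel G S v w) :
    Rel G S u w := by
  obtain ⟨p, hp⟩ := h
  obtain ⟨q, hq⟩ := h'
  refine ⟨p.append q, fun x hx => ?_⟩
  rcases (SimpleGraph.Walk.mem_support_append_iff p q).1 hx with h | h
  · exact hp x h
  · exact hq x h

lemma rel_adj {S : Set V} {u v : V} (hu : u ∉ S) (hv : v ∉ S) (h : G.Adj u v) :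
    Rel G S u v :=
  ⟨SimpleGraph.Walk.cons h SimpleGraph.Walk.nil, by
    intro x hx
    simp only [SimpleGraph.Walk.support_cons, SimpleGraph.Walk.support_nil,
      List.mem_cons, List.mem_singleton] at hx
    rcases hx with rfl | hx
    · exact hu
    · rcases hx with rfl | hx
      · exact hv
      · simp at hx⟩

/-- every vertex on the witnessing walk is related to the endpoint -/
lemma rel_of_mem_support {S : Set V} {u v : V} (p : G.Walk u v)
    (hp : ∀ x ∈ p.support, x ∉ S) : ∀ x ∈ p.support, Rel G S x v := by
  induction p with
  | nil =>
    intro x hx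
    rw [SimpleGraph.Walk.support_nil, List.mem_singleton] at hx
    subst hx; exact rel_refl (hp _ (by simp))
  | cons h q ih =>
    intro x hx
    have hq : ∀ y ∈ q.support, y ∉ S := fun y hy => hp y (by simp [hy])
    simp only [SimpleGraph.Walk.support_cons, List.mem_cons] at hx
    rcases hx with rfl | hx
    · exact (rel_adj (hp _ (by simp)) (hq _ q.start_mem_support) h).trans
        (ih hq _ q.start_mem_support)
    · exact ih hq x hx

/-- inclusion homomorphism from an induced subgraph -/
def valHom (A : Set V) : G.induce A →g G where
  toFun := Subtype.val
  map_rel' := fun h => h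

lemma rel_of_reachable_induce {S : Set V} {u v : V} {hu : u ∈ Sᶜ} {hv : v ∈ Sᶜ}
    (h : (G.induce Sᶜ).Reachable ⟨u, hu⟩ ⟨v, hv⟩) : Rel G S u v := by
  obtain ⟨p⟩ := h
  refine ⟨p.map (valHom Sᶜ), fun x hx => ?_⟩
  erw [SimpleGraph.Walk.support_map] at hx
  obtain ⟨y, _, rfl⟩ := List.mem_map.1 hx
  exact y.2

lemma reachable_induce_of_rel {S : Set V} {u v : V} (h : Rel G S u v) :
    ∀ (hu : u ∈ Sᶜ) (hv : v ∈ Sᶜ), (G.induce Sᶜ).Reachable ⟨u, hu⟩ ⟨v, hv⟩ := by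
  obtain ⟨p, hp⟩ := h
  induction p with
  | nil => intro hu hv; exact SimpleGraph.Reachable.refl _
  | cons hadj q ih =>
    intro hu hv
    have hq : ∀ y ∈ q.support, y ∉ S := fun y hy => hp y (by simp [hy])
    have hm : _ ∈ Sᶜ := hq _ q.start_mem_support
    exact (SimpleGraph.Adj.reachable (by exact hadj :
      (G.induce Sᶜ).Adj ⟨_, hu⟩ ⟨_, hm⟩)).trans (ih hq hm hv)

/-- The component of `v` in `G - S`. -/
def K (G : SimpleGraph V) (S : Set V) (v : V) : Set V := {u | Rel G S u v}

lemma mem_K {S : Set V} {u v : V} : u ∈ K G S v ↔ Rel G S u v := Iff.rfl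

lemma self_mem_K {S : Set V} {v : V} (hv : v ∉ S) : v ∈ K G S v := rel_refl hv

lemma K_not_mem {S : Set V} {u v : V} (h : u ∈ K G S v) : u ∉ S := h.not_mem_left

lemma K_eq_of_rel {S : Set V} {u v : V} (h : Rel G S u v) : K G S u = K G S v := by
  ext x
  exact ⟨fun hx => hx.trans h, fun hx => hx.trans h.symm⟩

lemma K_disjoint {S : Set V} {u v : V} (h : ¬ Rel G S u v) :
    Disjoint (K G S u) (K G S v) := by
  rw [Set.disjoint_left]
  intro x hx hx'
  exact h (hx.symm.trans hx')

lemma K_eq_of_mem {S : Set V} {u v : V} (h : u ∈ K G S v) : K G S u = K G S v :=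
  K_eq_of_rel h

end Stmt6Aux
section Weights

variable {V : Type} [Finite V]

/-- weight of a set: number of elements of `I` in it -/
noncomputable def wt (I : Finset V) (X : Set V) : ℕ := ((I : Set V) ∩ X).ncard

lemma wt_le_card (I : Finset V) (X : Set V) : wt I X ≤ I.card := by
  have := Set.ncard_le_ncard (Set.inter_subset_left (s := (I : Set V)) (t := X))
    (Set.toFinite _)
  simpa [wt, Set.ncard_coe_finset] using this

lemma wt_union (I : Finset V) {X Y : Set V} (h : Disjoint X Y) :
    wt I (X ∪ Y) = wt I X + wt I Y := by
  unfold wt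
  rw [Set.inter_union_distrib_left]
  exact Set.ncard_union_eq (h.mono Set.inter_subset_right Set.inter_subset_right)
    (Set.toFinite _) (Set.toFinite _)

lemma wt_univ (I : Finset V) : wt I Set.univ = I.card := by
  simp [wt, Set.ncard_coe_finset]

/-- if weights of two sets sum to more than `|I|`, they share an element of `I` -/
lemma exists_mem_inter_of_wt (I : Finset V) {X Y : Set V}
    (h : I.card < wt I X + wt I Y) : ∃ u ∈ I, u ∈ X ∧ u ∈ Y := by
  by_contra hc
  push_neg at hc
  have hdisj : Disjoint ((I : Set V) ∩ X) ((I : Set V) ∩ Y) := by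
    rw [Set.disjoint_left]
    rintro a ⟨haI, haX⟩ ⟨-, haY⟩
    exact hc a haI haX haY
  have h1 : ((I : Set V) ∩ X ∪ (I : Set V) ∩ Y).ncard = wt I X + wt I Y :=
    Set.ncard_union_eq hdisj (Set.toFinite _) (Set.toFinite _)
  have h2 : ((I : Set V) ∩ X ∪ (I : Set V) ∩ Y).ncard ≤ I.card := by
    have := Set.ncard_le_ncard
      (Set.union_subset Set.inter_subset_left Set.inter_subset_left :
        (I : Set V) ∩ X ∪ (I : Set V) ∩ Y ⊆ (I : Set V)) (Set.toFinite _)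
    simpa [Set.ncard_coe_finset] using this
  omega

lemma wt_sum_biUnion (I : Finset V) (s : Finset (Set V))
    (hdisj : ∀ C ∈ s, ∀ C' ∈ s, C ≠ C' → Disjoint C C') :
    ∑ C ∈ s, wt I C = wt I (⋃ C ∈ s, C) := by
  classical
  induction s using Finset.induction_on with
  | empty => simp [wt]
  | @insert C s' hC ih =>
    rw [Finset.sum_insert hC]
    have hd : Disjoint C (⋃ C' ∈ s', C') := by
      rw [Set.disjoint_iUnion_right]
      intro C'
      rw [Set.disjoint_iUnion_right]
      intro hC'
      exact hdisj C (by simp) C' (by simp [hC'])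
        (fun h => hC (h ▸ hC'))
    have := wt_union I hd
    rw [ih (fun a ha b hb hab => hdisj a (by simp [ha]) b (by simp [hb]) hab)]
    rw [← this]
    congr 1
    simp [Set.biUnion_insert]

end Weights

section BinPack

/-- three-bin packing: items of weight `≤ n/2` with total `≤ n` fit in three bins of size `n/2` -/
lemma bin3 {ι : Type} (n : ℕ) (wtf : ι → ℕ) :
    ∀ (N : ℕ) (s : Finset ι), s.card ≤ N → (∀ i ∈ s, 2 * wtf i ≤ n) →
      (∑ i ∈ s, wtf i ≤ n) → ∃ f : ι → Fin 3,
        ∀ j, 2 * (∑ i ∈ s.filter (fun i => f i = j), wtf i) ≤ n := by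
  classical
  intro N
  induction N with
  | zero =>
    intro s hcard _ _
    have : s = ∅ := Finset.card_eq_zero.1 (Nat.le_zero.1 hcard)
    subst this
    exact ⟨fun _ => 0, fun j => by simp⟩
  | succ N ih =>
    intro s hcard hle hsum
    rcases s.eq_empty_or_nonempty with rfl | hne
    · exact ⟨fun _ => 0, fun j => by simp⟩
    obtain ⟨x, hx, hmin⟩ := s.exists_min_image wtf hne
    have hcard' : (s.erase x).card ≤ N := by
      have := Finset.card_erase_of_mem hx
      omega
    have hle' : ∀ i ∈ s.erase x, 2 * wtf i ≤ n :=
      fun i hi => hle i (Finset.mem_of_mem_erase hi)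
    have hsum' : ∑ i ∈ s.erase x, wtf i ≤ n := by
      have := Finset.add_sum_erase s wtf hx
      omega
    obtain ⟨f, hf⟩ := ih (s.erase x) hcard' hle' hsum'
    set b : Fin 3 → ℕ := fun j => ∑ i ∈ (s.erase x).filter (fun i => f i = j), wtf i
      with hb
    have hbtot : b 0 + b 1 + b 2 + wtf x = ∑ i ∈ s, wtf i := by
      have h1 : ∑ j : Fin 3, b j = ∑ i ∈ s.erase x, wtf i := by
        rw [hb]
        exact Finset.sum_fiberwise_of_maps_to (fun i _ => Finset.mem_univ (f i)) wtf
      have h2 : wtf x + ∑ i ∈ s.erase x, wtf i = ∑ i ∈ s, wtf i :=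
        Finset.add_sum_erase s wtf hx
      rw [Fin.sum_univ_three] at h1
      omega
    have hbx : ∃ j, 2 * (b j + wtf x) ≤ n := by
      by_contra hcon
      push_neg at hcon
      have hge : ∀ j, wtf x ≤ b j := by
        intro j
        rcases ((s.erase x).filter (fun i => f i = j)).eq_empty_or_nonempty with he | hne'
        · exfalso
          have : b j = 0 := by rw [hb]; simp [he]
          have := hcon j
          have := hle x hx
          omega
        · obtain ⟨i, hi⟩ := hne'
          have hiw : wtf x ≤ wtf i :=
            hmin i (Finset.mem_of_mem_erase (Finset.mem_of_mem_filter i hi))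
          have : wtf i ≤ b j := Finset.single_le_sum (fun a _ => Nat.zero_le _) hi
          omega
      have h0 := hcon 0; have h1 := hcon 1; have h2 := hcon 2
      have g0 := hge 0; have g1 := hge 1; have g2 := hge 2
      omega
    obtain ⟨j, hj⟩ := hbx
    refine ⟨Function.update f x j, fun j' => ?_⟩
    have hsplit : s.filter (fun i => Function.update f x j i = j') =
        (if j = j' then {x} else ∅) ∪ (s.erase x).filter (fun i => f i = j') := by
      ext i
      by_cases hix : i = x
      · subst hix
        simp [Function.update_self, hx]
        split <;> simp_all
      · simp only [Finset.mem_filter, Function.update_of_ne hix, Finset.mem_union,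
          Finset.mem_erase]
        constructor
        · rintro ⟨his, hfi⟩
          exact Or.inr ⟨⟨hix, his⟩, hfi⟩
        · rintro (hmem | ⟨⟨-, his⟩, hfi⟩)
          · exfalso; split at hmem <;> simp_all
          · exact ⟨his, hfi⟩
    rw [hsplit]
    have hdisj : Disjoint (if j = j' then ({x} : Finset ι) else ∅)
        ((s.erase x).filter (fun i => f i = j')) := by
      split
      · simp only [Finset.disjoint_left, Finset.mem_singleton]
        rintro a rfl ha
        exact (Finset.mem_erase.1 (Finset.mem_of_mem_filter a ha)).1 rfl
      · simp
    rw [Finset.sum_union hdisj]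
    have := hf j'
    split
    · rename_i hjj'; subst hjj'
      rw [hb] at hj
      simp only [Finset.sum_singleton]
      linarith
    · simpa using this
namespace Stmt6Aux

open SimpleGraph

variable {V T : Type} {G : SimpleGraph V} {tree : SimpleGraph T}

/-- the set of tree nodes whose bag contains `v` -/
def TS (td : TreeDecomp G tree) (v : V) : Set T := {t | v ∈ td.bag t}

lemma rel_of_mem_TS (td : TreeDecomp G tree) {v : V} {t s₁ s₂ : T}
    (hs₁ : s₁ ∈ TS td v) (hs₂ : s₂ ∈ TS td v) (ht : t ∉ TS td v) :
    Rel tree ({t} : Set T) s₁ s₂ := by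
  obtain ⟨p⟩ := (td.conn v) ⟨s₁, hs₁⟩ ⟨s₂, hs₂⟩
  refine ⟨p.map (valHom {t | v ∈ td.bag t}), fun x hx => ?_⟩
  erw [SimpleGraph.Walk.support_map] at hx
  obtain ⟨y, _, rfl⟩ := List.mem_map.1 hx
  intro hxt
  rw [Set.mem_singleton_iff] at hxt
  exact ht (hxt ▸ y.2)

/-- if `u` and `b` are connected in `G - bag t'`, then for any node of `TS u` and
any node of `TS b`, there is a tree walk between them avoiding `t'` -/
lemma branch_of_rel (td : TreeDecomp G tree) {t' : T} {u b : V}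
    (h : Rel G (td.bag t') u b) :
    ∀ s_u ∈ TS td u, ∀ s_b ∈ TS td b, Rel tree ({t'} : Set T) s_u s_b := by
  obtain ⟨p, hp⟩ := h
  induction p with
  | nil =>
    intro s_u hsu s_b hsb
    exact rel_of_mem_TS td hsu hsb (fun hmem => hp _ (by simp) hmem)
  | cons hadj q ih =>
    rename_i u m b'
    intro s_u hsu s_b hsb
    have hq : ∀ y ∈ q.support, y ∉ td.bag t' := fun y hy => hp y (by simp [hy])
    have hu' : u ∉ td.bag t' := hp u (by simp)
    have hm : m ∉ td.bag t' := hq m q.start_mem_support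
    obtain ⟨s, hsu', hsm⟩ := td.edge_bag hadj
    have h1 : Rel tree ({t'} : Set T) s_u s := rel_of_mem_TS td hsu hsu' hu'
    exact h1.trans (ih hq s hsm s_b hsb)

lemma exists_balanced_bag [Finite V] (td : TreeDecomp G tree) (I : Finset V) :
    ∃ t : T, ∀ v : V, v ∉ td.bag t → 2 * wt I (K G (td.bag t) v) ≤ I.card := by
  by_contra hcon
  push_neg at hcon
  have hconn := td.isTree.isConnected
  have main : ∀ a d : ℕ, ∀ (t : T) (v : V), v ∉ td.bag t →
      I.card < 2 * wt I (K G (td.bag t) v) →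
      ∀ u, u ∈ I → u ∈ K G (td.bag t) v →
      ∀ s₀, s₀ ∈ TS td u →
      (K G (td.bag t) v).ncard ≤ a → tree.dist t s₀ ≤ d → False := by
    intro a
    induction a using Nat.strong_induction_on with
    | _ a iha =>
    intro d
    induction d using Nat.strong_induction_on with
    | _ d ihd =>
    intro t v hv hheavy u hu huK s₀ hs₀ hcard hdist
    have huS : u ∉ td.bag t := K_not_mem huK
    have hts₀ : t ≠ s₀ := fun h => huS (h ▸ hs₀)
    have hdpos : 0 < tree.dist t s₀ := hconn.pos_dist_of_ne hts₀
    obtain ⟨p, hpath, hplen⟩ := hconn.exists_path_of_dist t s₀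
    cases p with
    | nil => exact hts₀ rfl
    | cons hadj q =>
      rename_i t'
      rw [SimpleGraph.Walk.cons_isPath_iff] at hpath
      obtain ⟨hqpath, htq⟩ := hpath
      rw [SimpleGraph.Walk.length_cons] at hplen
      obtain ⟨v', hv', hheavy'⟩ := hcon t'
      obtain ⟨u', hu'I, hu'C, hu'C'⟩ := exists_mem_inter_of_wt I
        (X := K G (td.bag t) v) (Y := K G (td.bag t') v') (by omega)
      obtain ⟨s_a, hs_a⟩ := td.mem_bag u'
      -- Claim 2 : the component of v' at t' avoids bag t
      have claim2 : ∀ b, b ∈ K G (td.bag t') v' → b ∉ td.bag t := by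
        intro b hbC' hbt
        have hrel' : Rel G (td.bag t') u' b := (mem_K.1 hu'C').trans (mem_K.1 hbC').symm
        have hA : Rel tree ({t'} : Set T) s_a t :=
          branch_of_rel td hrel' s_a hs_a t hbt
        have hrelu : Rel G (td.bag t) u' u := (mem_K.1 hu'C).trans (mem_K.1 huK).symm
        have hB : Rel tree ({t} : Set T) s_a s₀ := branch_of_rel td hrelu s_a hs_a s₀ hs₀
        have hC0 : Rel tree ({t} : Set T) s₀ t' := by
          refine ⟨q.reverse, fun x hx => ?_⟩
          rw [SimpleGraph.Walk.support_reverse, List.mem_reverse] at hx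
          intro hxt
          rw [Set.mem_singleton_iff] at hxt
          exact htq (hxt ▸ hx)
        have hBC : Rel tree ({t} : Set T) s_a t' := hB.trans hC0
        have hbridge := isAcyclic_iff_forall_adj_isBridge.mp td.isTree.IsAcyclic hadj
        rw [SimpleGraph.isBridge_iff] at hbridge
        apply hbridge
        rw [SimpleGraph.reachable_delete_edges_iff_exists_walk]
        obtain ⟨pA, hpA⟩ := hA
        obtain ⟨pD, hpD⟩ := hBC
        refine ⟨pA.reverse.append pD, fun hmem => ?_⟩
        rw [SimpleGraph.Walk.edges_append, List.mem_append] at hmem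
        rcases hmem with hmem | hmem
        · have := SimpleGraph.Walk.snd_mem_support_of_mem_edges _ hmem
          rw [SimpleGraph.Walk.support_reverse, List.mem_reverse] at this
          exact hpA t' this rfl
        · have := SimpleGraph.Walk.fst_mem_support_of_mem_edges _ hmem
          exact hpD t this rfl
      -- Claim 3 : the component of v' at t' is contained in the component of v at t
      have claim3 : K G (td.bag t') v' ⊆ K G (td.bag t) v := by
        intro x hx
        have hxu' : Rel G (td.bag t') x u' := (mem_K.1 hx).trans (mem_K.1 hu'C').symm
        obtain ⟨px, hpx⟩ := hxu'
        have hsupp : ∀ y ∈ px.support, y ∉ td.bag t := by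
          intro y hy
          have hyrel : Rel G (td.bag t') y u' := rel_of_mem_support px hpx y hy
          exact claim2 y (mem_K.2 (hyrel.trans (mem_K.1 hu'C')))
        exact mem_K.2 ((Rel.trans ⟨px, hsupp⟩ (mem_K.1 hu'C)))
      by_cases hcase : ∃ y ∈ K G (td.bag t) v, y ∈ td.bag t'
      · -- strictly smaller component: outer induction
        obtain ⟨y, hyC, hyt'⟩ := hcase
        have hyC' : y ∉ K G (td.bag t') v' := fun h => K_not_mem h hyt'
        have hss : K G (td.bag t') v' ⊂ K G (td.bag t) v :=
          ⟨claim3, fun hsub => hyC' (hsub hyC)⟩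
        have hlt : (K G (td.bag t') v').ncard < (K G (td.bag t) v).ncard :=
          Set.ncard_lt_ncard hss (Set.toFinite _)
        exact iha (K G (td.bag t') v').ncard (lt_of_lt_of_le hlt hcard)
          (tree.dist t' s_a) t' v' hv' hheavy' u' hu'I hu'C' s_a hs_a le_rfl le_rfl
      · -- same component: inner induction, distance decreases
        push_neg at hcase
        have hCC' : K G (td.bag t) v ⊆ K G (td.bag t') v' := by
          intro x hx
          have hxu' : Rel G (td.bag t) x u' := (mem_K.1 hx).trans (mem_K.1 hu'C).symm
          obtain ⟨px, hpx⟩ := hxu'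
          have hsupp : ∀ y ∈ px.support, y ∉ td.bag t' := by
            intro y hy
            have hyrel : Rel G (td.bag t) y u' := rel_of_mem_support px hpx y hy
            exact hcase y (mem_K.2 (hyrel.trans (mem_K.1 hu'C)))
          exact mem_K.2 ((Rel.trans ⟨px, hsupp⟩ (mem_K.1 hu'C')))
        have hCeq : K G (td.bag t') v' = K G (td.bag t) v :=
          Set.Subset.antisymm claim3 hCC'
        have hdist' : tree.dist t' s₀ ≤ d - 1 := by
          have h1 : tree.dist t' s₀ ≤ q.length := SimpleGraph.dist_le q
          omega
        exact ihd (d - 1) (by omega) t' v' hv' hheavy' u hu (hCC' huK) s₀ hs₀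
          (by rw [hCeq]; exact hcard) hdist'
  obtain ⟨t₀⟩ := hconn.nonempty
  obtain ⟨v0, hv0, hh0⟩ := hcon t₀
  have hne : ((I : Set V) ∩ K G (td.bag t₀) v0).Nonempty := by
    rw [Set.nonempty_iff_ne_empty]
    intro hemp
    have : wt I (K G (td.bag t₀) v0) = 0 := by rw [wt, hemp, Set.ncard_empty]
    omega
  obtain ⟨u, huI, huK⟩ := hne
  obtain ⟨s₀, hs₀⟩ := td.mem_bag u
  exact main (K G (td.bag t₀) v0).ncard (tree.dist t₀ s₀) t₀ v0 hv0 hh0 u huI huK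
    s₀ hs₀ le_rfl le_rfl

end Stmt6Aux
namespace Stmt6Aux

open SimpleGraph

lemma card_le_alphaOn {V : Type} [Finite V] (G : SimpleGraph V) (W : Set V)
    (S' : Finset V) (hsub : ↑S' ⊆ W) (hind : G.IsIndep ↑S') :
    S'.card ≤ alphaOn G W := by
  have : Fintype V := Fintype.ofFinite V
  apply le_csSup
  · refine ⟨Fintype.card V, ?_⟩
    rintro n ⟨S'', _, _, rfl⟩
    exact Finset.card_le_univ S''
  · exact ⟨S', hsub, hind, rfl⟩

end Stmt6Aux

/-- if `tree-α(G) ≤ k` and `I` is an independent set, there is a partition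
`(S, C1, C2, C3)` of `V(G)` with `S` a `(C1,C2,C3)`-separator, `α(S) ≤ k`, and
`|I ∩ (Cᵢ ∪ Cⱼ)| ≥ |I|/2 − k` for all distinct `i, j` (stated as
`|I| ≤ 2·|I ∩ (Cᵢ ∪ Cⱼ)| + 2k`). -/
theorem stmt6 {V : Type} [Finite V] (G : SimpleGraph V) (k : ℕ)
    (hG : TreeAlphaLE G k) (I : Finset V) (hI : G.IsIndep ↑I) :
    ∃ S C1 C2 C3 : Set V,
      S ∪ C1 ∪ C2 ∪ C3 = Set.univ ∧
      Disjoint C1 C2 ∧ Disjoint C1 C3 ∧ Disjoint C2 C3 ∧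
      IsSep3 G S C1 C2 C3 ∧
      alphaOn G S ≤ k ∧
      (∀ A B : Set V,
        ((A = C1 ∧ B = C2) ∨ (A = C1 ∧ B = C3) ∨ (A = C2 ∧ B = C3)) →
        I.card ≤ 2 * ((↑I : Set V) ∩ (A ∪ B)).ncard + 2 * k) := by
  classical
  open Stmt6Aux in
  obtain ⟨T, tree, td, hbags⟩ := hG
  obtain ⟨t, hbal⟩ := Stmt6Aux.exists_balanced_bag td I
  haveI : Fintype V := Fintype.ofFinite V
  set S := td.bag t with hSdef
  set comps : Finset (Set V) := (Finset.univ.filter (fun v => v ∉ S)).image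
      (fun v => Stmt6Aux.K G S v) with hcomps
  have hmem_comps : ∀ C ∈ comps, ∃ v, v ∉ S ∧ Stmt6Aux.K G S v = C := by
    intro C hC
    rw [hcomps, Finset.mem_image] at hC
    obtain ⟨v, hv, rfl⟩ := hC
    exact ⟨v, by simpa using (Finset.mem_filter.1 hv).2, rfl⟩
  have hK_mem_comps : ∀ v : V, v ∉ S → Stmt6Aux.K G S v ∈ comps := by
    intro v hv
    rw [hcomps, Finset.mem_image]
    exact ⟨v, by simp [hv], rfl⟩
  have hdisj : ∀ C ∈ comps, ∀ C' ∈ comps, C ≠ C' → Disjoint C C' := by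
    intro C hC C' hC' hne
    obtain ⟨v, hv, rfl⟩ := hmem_comps C hC
    obtain ⟨v', hv', rfl⟩ := hmem_comps C' hC'
    refine Stmt6Aux.K_disjoint (fun hrel => hne ?_)
    exact Stmt6Aux.K_eq_of_rel hrel
  have hsum : ∑ C ∈ comps, wt I C ≤ I.card := by
    rw [wt_sum_biUnion I comps hdisj]
    exact wt_le_card I _
  have heach : ∀ C ∈ comps, 2 * wt I C ≤ I.card := by
    intro C hC
    obtain ⟨v, hv, rfl⟩ := hmem_comps C hC
    exact hbal v hv
  obtain ⟨f, hf⟩ := bin3 I.card (wt I) comps.card comps le_rfl heach hsum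
  set Cs : Fin 3 → Set V := fun j => {x | x ∉ S ∧ f (Stmt6Aux.K G S x) = j} with hCs
  have hCsS : ∀ j, ∀ x ∈ Cs j, x ∉ S := fun j x hx => hx.1
  have hrelCs : ∀ (a b : V), Stmt6Aux.Rel G S a b → ∀ i j, a ∈ Cs i → b ∈ Cs j → i = j := by
    intro a b hrel i j ha hb
    have hKeq := Stmt6Aux.K_eq_of_rel hrel
    rw [← ha.2, ← hb.2, hKeq]
  have hCsval : ∀ j, wt I (Cs j) = ∑ C ∈ comps.filter (fun C => f C = j), wt I C := by
    intro j
    rw [wt_sum_biUnion I _ (fun C hC C' hC' hne =>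
      hdisj C (Finset.mem_of_mem_filter C hC) C' (Finset.mem_of_mem_filter C' hC') hne)]
    congr 1
    ext x
    simp only [Set.mem_iUnion, Finset.mem_filter]
    constructor
    · rintro ⟨hxS, hfx⟩
      exact ⟨Stmt6Aux.K G S x, ⟨⟨hK_mem_comps x hxS, hfx⟩, Stmt6Aux.self_mem_K hxS⟩⟩
    · rintro ⟨C, ⟨⟨hCc, hfC⟩, hxC⟩⟩
      obtain ⟨v, hv, rfl⟩ := hmem_comps C hCc
      have hxS : x ∉ S := Stmt6Aux.K_not_mem hxC
      have : Stmt6Aux.K G S x = Stmt6Aux.K G S v := Stmt6Aux.K_eq_of_mem hxC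
      exact ⟨hxS, by rw [this]; exact hfC⟩
  have hCsw : ∀ j, 2 * wt I (Cs j) ≤ I.card := fun j => by rw [hCsval]; exact hf j
  have hfin3 : ∀ j : Fin 3, j = 0 ∨ j = 1 ∨ j = 2 := by decide
  have hcover : S ∪ Cs 0 ∪ Cs 1 ∪ Cs 2 = Set.univ := by
    ext x
    simp only [Set.mem_union, Set.mem_univ, iff_true]
    by_cases hxS : x ∈ S
    · tauto
    · rcases hfin3 (f (Stmt6Aux.K G S x)) with h | h | h
      · exact Or.inl (Or.inl (Or.inr ⟨hxS, h⟩))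
      · exact Or.inl (Or.inr ⟨hxS, h⟩)
      · exact Or.inr ⟨hxS, h⟩
  have hdisjCs : ∀ i j, i ≠ j → Disjoint (Cs i) (Cs j) := by
    intro i j hne
    rw [Set.disjoint_left]
    rintro x ⟨hxS, hxi⟩ ⟨-, hxj⟩
    exact hne (hxi ▸ hxj ▸ rfl)
  have hdisjS : ∀ j, Disjoint S (Cs j) := by
    intro j
    rw [Set.disjoint_left]
    rintro x hxS ⟨hxS', -⟩
    exact hxS' hxS
  have hsep : ∀ i j, i ≠ j → SepFrom G S (Cs i) (Cs j) := by
    intro i j hne a ha b hb ha' hb' hreach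
    exact hne (hrelCs a b (Stmt6Aux.rel_of_reachable_induce hreach) i j ha hb)
  have hwtpart : wt I S + wt I (Cs 0) + wt I (Cs 1) + wt I (Cs 2) = I.card := by
    have e1 : wt I (S ∪ Cs 0) = wt I S + wt I (Cs 0) := wt_union I (hdisjS 0)
    have d2 : Disjoint (S ∪ Cs 0) (Cs 1) :=
      Set.disjoint_union_left.2 ⟨hdisjS 1, hdisjCs 0 1 (by decide)⟩
    have e2 := wt_union I d2
    have d3 : Disjoint (S ∪ Cs 0 ∪ Cs 1) (Cs 2) :=
      Set.disjoint_union_left.2 ⟨Set.disjoint_union_left.2 ⟨hdisjS 2,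
        hdisjCs 0 2 (by decide)⟩, hdisjCs 1 2 (by decide)⟩
    have e3 := wt_union I d3
    rw [hcover, wt_univ] at e3
    omega
  have hSk : wt I S ≤ k := by
    set S' : Finset V := I.filter (fun v => v ∈ S) with hS'
    have hcoe : (↑S' : Set V) = ↑I ∩ S := by
      ext x
      simp [hS', Finset.mem_filter]
    have h1 : wt I S = S'.card := by rw [wt, ← hcoe, Set.ncard_coe_finset]
    have h2 : S'.card ≤ alphaOn G S :=
      Stmt6Aux.card_le_alphaOn G S S'
        (by rw [hcoe]; exact Set.inter_subset_right)
        (hI.mono (by rw [hcoe]; exact Set.inter_subset_left))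
    exact h1 ▸ h2.trans (hbags t)
  refine ⟨S, Cs 0, Cs 1, Cs 2, hcover, hdisjCs 0 1 (by decide), hdisjCs 0 2 (by decide),
    hdisjCs 1 2 (by decide),
    ⟨hdisjS 0, hdisjS 1, hdisjS 2, hsep 0 1 (by decide), hsep 0 2 (by decide),
      hsep 1 2 (by decide)⟩, hbags t, ?_⟩
  intro A B hAB
  rcases hAB with ⟨rfl, rfl⟩ | ⟨rfl, rfl⟩ | ⟨rfl, rfl⟩
  · have e : ((↑I : Set V) ∩ (Cs 0 ∪ Cs 1)).ncard = wt I (Cs 0) + wt I (Cs 1) :=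
      wt_union I (hdisjCs 0 1 (by decide))
    have := hCsw 2
    omega
  · have e : ((↑I : Set V) ∩ (Cs 0 ∪ Cs 2)).ncard = wt I (Cs 0) + wt I (Cs 2) :=
      wt_union I (hdisjCs 0 2 (by decide))
    have := hCsw 1
    omega
  · have e : ((↑I : Set V) ∩ (Cs 1 ∪ Cs 2)).ncard = wt I (Cs 1) + wt I (Cs 2) :=
      wt_union I (hdisjCs 1 2 (by decide))
    have := hCsw 0
    omega
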